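/- arXiv:2205.06375 — 2 statements merged into one kernel-verified Lean document; each statement's English description precedes it below -/
import Mathlib

section
/- Let w be a nonempty area sequence with maximum value m and let c be a position with w_c = m − 1 and w_j < m for all j > c. Then dinv(ins_c(w)) = dinv(w) + #{ j : w_j = m } + #{ j > c : w_j = m − 1 }, and the maximum value of ins_c(w) is m. -/
/-- The `i`-th letter of the word `w` (`1`-indexed, as in the paper);
defaults to `0` out of range. -/
def get1 (w : List ℕ) (i : ℕ) : ℕ := w.getD (i - 1) 0

/-- `w` is the area sequence of a Dyck path: the first letter is `0` and each
letter exceeds the previous one by at most one. -/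
def IsAreaSeq (w : List ℕ) : Prop :=
  (w ≠ [] → get1 w 1 = 0) ∧ ∀ i, 1 ≤ i → i < w.length → get1 w (i + 1) ≤ get1 w i + 1

/-- Insertion at position `i` (for `0 ≤ i ≤ n`): `ins w 0` prepends a `0`, and
for `1 ≤ i ≤ n`, `ins w i` inserts the letter `w_i + 1` just after position `i`. -/
def ins (w : List ℕ) (i : ℕ) : List ℕ :=
  w.take i ++ (if i = 0 then 0 else get1 w i + 1) :: w.drop i

/-- The area statistic: the sum of the letters. -/
def area (w : List ℕ) : ℕ := w.sum

/-- The dinv statistic: `dinv w = Σ_i d_i` where `d_i` is the number of `j > i`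
with `w_j = w_i` or `w_j = w_i - 1`. -/
def dinv (w : List ℕ) : ℕ :=
  ∑ i ∈ Finset.Icc 1 w.length,
    ((Finset.Ioc i w.length).filter
      (fun j => get1 w j = get1 w i ∨ get1 w j + 1 = get1 w i)).card

/-- The maximal value of a word (`0` for the empty word). -/
def maxVal (w : List ℕ) : ℕ := w.foldr max 0

/-- Positions of the letters of maximal value `m`. -/
def Maxb (w : List ℕ) : Finset ℕ :=
  (Finset.Icc 1 w.length).filter (fun i => get1 w i = maxVal w)

/-- Positions `i` with `w_i = m - 1` such that all letters after position `i`
are `< m`. -/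
def Maxa (w : List ℕ) : Finset ℕ :=
  (Finset.Icc 1 w.length).filter (fun i =>
    get1 w i + 1 = maxVal w ∧ ∀ j ∈ Finset.Ioc i w.length, get1 w j < maxVal w)

/-- The position of the leftmost letter equal to the maximal value `m` in the
rightmost block of consecutive letters equal to `m`. -/
def i0 (w : List ℕ) : ℕ :=
  ((Finset.Icc 1 w.length).filter (fun i =>
    get1 w i = maxVal w ∧ (i = 1 ∨ get1 w (i - 1) ≠ maxVal w))).sup id

/-- The admissible insertion positions of `w`, listed in admissible order:
the elements of `Maxb w` in decreasing order, then the elements of `Maxa w`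
in decreasing order, then `i0 w - 1`.  The empty word has the single
admissible insertion position `0`. -/
def admissible (w : List ℕ) : List ℕ :=
  if w = [] then [0]
  else ((Maxb w).sort (· ≤ ·)).reverse ++ ((Maxa w).sort (· ≤ ·)).reverse ++ [i0 w - 1]

/-- Auxiliary version of the map `ψ`, reading the reversed word. -/
def psiRev : List ℕ → List ℕ
  | [] => []
  | a :: u => ins (psiRev u) ((admissible (psiRev u)).getD a 0)

/-- The map `ψ`: `ψ(ε) = ε` and `ψ(u a) = ins_{c_a}(ψ(u))` where
`c_0, c_1, …, c_k` are the admissible insertion positions of `ψ(u)` in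
admissible order. -/
def psi (w : List ℕ) : List ℕ := psiRev w.reverse

/-- The bounce sequence: `b_1 = 0`, and `b_i = b_{i-1} + 1` if
`b_{i-1} + 1 ≤ w_i`, otherwise `b_i = 0`. -/
def bseq (w : List ℕ) : ℕ → ℕ
  | 0 => 0
  | 1 => 0
  | (i + 2) => if bseq w (i + 1) + 1 ≤ get1 w (i + 2) then bseq w (i + 1) + 1 else 0

/-- The bounces of `w`: positions `1 < i ≤ n` with `b_i = 0`. -/
def bounces (w : List ℕ) : Finset ℕ :=
  (Finset.Icc 2 w.length).filter (fun i => bseq w i = 0)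

/-- The bounce statistic: the sum of the reversed positions `n - i + 1` of the
bounces of `w`. -/
def bounce (w : List ℕ) : ℕ := ∑ i ∈ bounces w, (w.length - i + 1)



private lemma le_maxVal_of_mem {a : ℕ} : ∀ {w : List ℕ}, a ∈ w → a ≤ maxVal w := by
  intro w
  induction w with
  | nil => intro h; simp at h
  | cons b t ih =>
    intro h
    show a ≤ max b (maxVal t)
    rcases List.mem_cons.1 h with h | h
    · subst h; exact le_max_left _ _
    · exact le_trans (ih h) (le_max_right _ _)

private lemma maxVal_le_of {b : ℕ} : ∀ {w : List ℕ}, (∀ a ∈ w, a ≤ b) → maxVal w ≤ b := by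
  intro w
  induction w with
  | nil => intro _; simp [maxVal]
  | cons x t ih =>
    intro h
    show max x (maxVal t) ≤ b
    exact max_le (h x (by simp)) (ih fun a ha => h a (by simp [ha]))

private lemma get1_eq_getElem? (w : List ℕ) (i : ℕ) : get1 w i = (w[i-1]?).getD 0 :=
  List.getD_eq_getElem?_getD

private lemma get1_le_maxVal {w : List ℕ} {i : ℕ} (h1 : 1 ≤ i) (h2 : i ≤ w.length) :
    get1 w i ≤ maxVal w := by
  have hlt : i - 1 < w.length := by omega
  have : get1 w i = w[i-1] := by
    rw [get1_eq_getElem?, List.getElem?_eq_getElem hlt]; rfl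
  rw [this]
  exact le_maxVal_of_mem (List.getElem_mem hlt)

private lemma ins_length {w : List ℕ} {c : ℕ} (hc2 : c ≤ w.length) :
    (ins w c).length = w.length + 1 := by
  simp [ins]; omega

private lemma get1_ins_left {w : List ℕ} {c i : ℕ} (hc1 : 1 ≤ c) (hc2 : c ≤ w.length)
    (h1 : 1 ≤ i) (h2 : i ≤ c) : get1 (ins w c) i = get1 w i := by
  rw [get1_eq_getElem? _ i, get1_eq_getElem? w i]
  unfold ins
  rw [if_neg (by omega : ¬ c = 0),
    List.getElem?_append, List.length_take, if_pos (by omega),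
    List.getElem?_take_of_lt (by omega)]

private lemma get1_ins_mid {w : List ℕ} {c : ℕ} (hc1 : 1 ≤ c) (hc2 : c ≤ w.length) :
    get1 (ins w c) (c+1) = get1 w c + 1 := by
  rw [get1_eq_getElem? _ (c+1)]
  unfold ins
  rw [if_neg (by omega : ¬ c = 0),
    List.getElem?_append, List.length_take, if_neg (by omega)]
  have h : c + 1 - 1 - min c w.length = 0 := by omega
  rw [h]
  simp

private lemma get1_ins_right {w : List ℕ} {c i : ℕ} (hc1 : 1 ≤ c) (hc2 : c ≤ w.length)
    (h2 : c + 2 ≤ i) : get1 (ins w c) i = get1 w (i-1) := by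
  obtain ⟨k, rfl⟩ : ∃ k, i = c + 2 + k := ⟨i - c - 2, by omega⟩
  rw [get1_eq_getElem? _ (c+2+k), get1_eq_getElem? w (c+2+k-1)]
  unfold ins
  rw [if_neg (by omega : ¬ c = 0),
    List.getElem?_append, List.length_take, if_neg (by omega)]
  have h3 : c + 2 + k - 1 - min c w.length = k + 1 := by omega
  have h4 : c + 2 + k - 1 - 1 = c + k := by omega
  rw [h3, h4, List.getElem?_cons_succ, List.getElem?_drop]

private lemma ioc_disj (a b c : ℕ) : Disjoint (Finset.Ioc a b) (Finset.Ioc b c) := by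
  rw [Finset.disjoint_left]
  intro x hx hx'
  simp only [Finset.mem_Ioc] at hx hx'
  omega

private lemma card_filter_Ioc_split (p : ℕ → Prop) [DecidablePred p] {a b c : ℕ}
    (h1 : a ≤ b) (h2 : b ≤ c) :
    ((Finset.Ioc a c).filter p).card
      = ((Finset.Ioc a b).filter p).card + ((Finset.Ioc b c).filter p).card := by
  rw [← Finset.Ioc_union_Ioc_eq_Ioc h1 h2, Finset.filter_union,
    Finset.card_union_of_disjoint (Finset.disjoint_filter_filter (ioc_disj a b c))]

private lemma card_filter_Ioc_shift (a b : ℕ) (p : ℕ → Prop) [DecidablePred p] :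
    ((Finset.Ioc (a+1) (b+1)).filter p).card
      = ((Finset.Ioc a b).filter (fun j => p (j+1))).card := by
  rw [← Finset.map_add_right_Ioc a b 1, Finset.filter_map, Finset.card_map]
  rfl

private lemma sum_Ioc_shift (f : ℕ → ℕ) (a b : ℕ) :
    ∑ i ∈ Finset.Ioc (a+1) (b+1), f i = ∑ i ∈ Finset.Ioc a b, f (i+1) := by
  rw [← Finset.map_add_right_Ioc a b 1, Finset.sum_map]
  rfl

private lemma card_filter_singleton (p : ℕ → Prop) [DecidablePred p] (a : ℕ) :
    (({a} : Finset ℕ).filter p).card = if p a then 1 else 0 := by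
  rw [Finset.filter_singleton]
  split <;> simp

private lemma dinv_aux (w v : List ℕ) (m c : ℕ)
    (hvlen : v.length = w.length + 1)
    (hc1 : 1 ≤ c) (hc2 : c ≤ w.length)
    (hle : ∀ i, 1 ≤ i → i ≤ w.length → get1 w i ≤ m)
    (hright : ∀ j, c < j → j ≤ w.length → get1 w j < m)
    (hvl : ∀ i, 1 ≤ i → i ≤ c → get1 v i = get1 w i)
    (hvm : get1 v (c+1) = m)
    (hvr : ∀ i, c+2 ≤ i → get1 v i = get1 w (i-1)) :
    dinv v = dinv w + ((Finset.Icc 1 w.length).filter (fun j => get1 w j = m)).card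
      + ((Finset.Ioc c w.length).filter (fun j => get1 w j + 1 = m)).card := by
  set n := w.length with hn
  have hIcc : ∀ x : ℕ, Finset.Icc 1 x = Finset.Ioc 0 x := fun x => by
    ext y; simp only [Finset.mem_Icc, Finset.mem_Ioc]; omega
  set F : ℕ → ℕ := fun i => ((Finset.Ioc i (n+1)).filter
      (fun j => get1 v j = get1 v i ∨ get1 v j + 1 = get1 v i)).card with hF
  set G : ℕ → ℕ := fun i => ((Finset.Ioc i n).filter
      (fun j => get1 w j = get1 w i ∨ get1 w j + 1 = get1 w i)).card with hG
  have hdv : dinv v = ∑ i ∈ Finset.Ioc 0 (n+1), F i := by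
    simp only [hF]
    unfold dinv
    rw [hvlen, hIcc]
  have hdw : dinv w = ∑ i ∈ Finset.Ioc 0 n, G i := by
    simp only [hG]
    unfold dinv
    rw [← hn, hIcc]
  have shift_spec : ∀ (a x : ℕ),
      ((Finset.Ioc (a+1) (n+1)).filter (fun j => get1 v j = x ∨ get1 v j + 1 = x)).card
        = ((Finset.Ioc a n).filter (fun j => get1 v (j+1) = x ∨ get1 v (j+1) + 1 = x)).card := by
    intro a x
    rw [card_filter_Ioc_shift]
  have key1 : ∀ i, 1 ≤ i → i ≤ c → F i = G i + (if get1 w i = m then 1 else 0) := by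
    intro i h1 h2
    have hvi : get1 v i = get1 w i := hvl i h1 h2
    simp only [hF, hG]
    rw [card_filter_Ioc_split _ (show i ≤ c+1 by omega) (show c+1 ≤ n+1 by omega),
      card_filter_Ioc_split _ (show i ≤ c by omega) (show c ≤ c+1 by omega),
      Nat.Ioc_succ_singleton, card_filter_singleton, shift_spec c (get1 v i),
      card_filter_Ioc_split _ (show i ≤ c by omega) (show c ≤ n by omega)]
    have e1 : (Finset.Ioc i c).filter (fun j => get1 v j = get1 v i ∨ get1 v j + 1 = get1 v i)
        = (Finset.Ioc i c).filter (fun j => get1 w j = get1 w i ∨ get1 w j + 1 = get1 w i) := by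
      apply Finset.filter_congr
      intro j hj
      simp only [Finset.mem_Ioc] at hj
      rw [hvl j (by omega) hj.2, hvi]
    have e2 : (Finset.Ioc c n).filter (fun j => get1 v (j+1) = get1 v i ∨ get1 v (j+1) + 1 = get1 v i)
        = (Finset.Ioc c n).filter (fun j => get1 w j = get1 w i ∨ get1 w j + 1 = get1 w i) := by
      apply Finset.filter_congr
      intro j hj
      simp only [Finset.mem_Ioc] at hj
      have hx : get1 v (j+1) = get1 w j := by
        rw [hvr (j+1) (by omega)]; norm_num
      rw [hx, hvi]
    have e3 : (if get1 v (c+1) = get1 v i ∨ get1 v (c+1) + 1 = get1 v i then 1 else 0)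
        = (if get1 w i = m then 1 else 0) := by
      rw [hvm, hvi]
      have hb := hle i h1 (by omega)
      by_cases hh : get1 w i = m
      · rw [if_pos (Or.inl hh.symm), if_pos hh]
      · rw [if_neg (by rintro (h | h) <;> omega), if_neg hh]
    rw [e1, e2, e3]
    ring
  have key2 : F (c+1) = ((Finset.Ioc c n).filter (fun j => get1 w j + 1 = m)).card := by
    simp only [hF]
    rw [shift_spec c (get1 v (c+1))]
    congr 1
    apply Finset.filter_congr
    intro j hj
    simp only [Finset.mem_Ioc] at hj
    have hx : get1 v (j+1) = get1 w j := by
      rw [hvr (j+1) (by omega)]; norm_num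
    rw [hx, hvm]
    have := hright j hj.1 hj.2
    omega
  have key3 : ∀ i, c+1 ≤ i → i ≤ n → F (i+1) = G i := by
    intro i h1 h2
    simp only [hF, hG]
    have hvi : get1 v (i+1) = get1 w i := by
      rw [hvr (i+1) (by omega)]; norm_num
    rw [shift_spec i (get1 v (i+1))]
    congr 1
    apply Finset.filter_congr
    intro j hj
    simp only [Finset.mem_Ioc] at hj
    have hx : get1 v (j+1) = get1 w j := by
      rw [hvr (j+1) (by omega)]; norm_num
    rw [hx, hvi]
  have splitv : ∑ i ∈ Finset.Ioc 0 (n+1), F i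
      = (∑ i ∈ Finset.Ioc 0 c, F i) + (F (c+1) + ∑ i ∈ Finset.Ioc (c+1) (n+1), F i) := by
    rw [← Finset.sum_Ioc_consecutive F (show (0:ℕ) ≤ c by omega) (show c ≤ n+1 by omega),
      ← Finset.sum_Ioc_consecutive F (show c ≤ c+1 by omega) (show c+1 ≤ n+1 by omega),
      Nat.Ioc_succ_singleton, Finset.sum_singleton]
  have splitw : ∑ i ∈ Finset.Ioc 0 n, G i
      = (∑ i ∈ Finset.Ioc 0 c, G i) + ∑ i ∈ Finset.Ioc c n, G i :=
    (Finset.sum_Ioc_consecutive G (by omega) hc2).symm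
  have sum1 : ∑ i ∈ Finset.Ioc 0 c, F i
      = (∑ i ∈ Finset.Ioc 0 c, G i) + ∑ i ∈ Finset.Ioc 0 c, (if get1 w i = m then 1 else 0) := by
    rw [← Finset.sum_add_distrib]
    apply Finset.sum_congr rfl
    intro i hi
    simp only [Finset.mem_Ioc] at hi
    exact key1 i hi.1 hi.2
  have sum2 : ∑ i ∈ Finset.Ioc (c+1) (n+1), F i = ∑ i ∈ Finset.Ioc c n, G i := by
    rw [sum_Ioc_shift F c n]
    apply Finset.sum_congr rfl
    intro i hi
    simp only [Finset.mem_Ioc] at hi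
    exact key3 i hi.1 hi.2
  have sumite : ∑ i ∈ Finset.Ioc 0 c, (if get1 w i = m then 1 else 0)
      = ((Finset.Icc 1 n).filter (fun j => get1 w j = m)).card := by
    rw [hIcc n, Finset.card_filter,
      ← Finset.sum_Ioc_consecutive _ (show (0:ℕ) ≤ c by omega) hc2]
    have hz : ∑ i ∈ Finset.Ioc c n, (if get1 w i = m then 1 else 0) = 0 := by
      apply Finset.sum_eq_zero
      intro i hi
      simp only [Finset.mem_Ioc] at hi
      rw [if_neg]
      have := hright i hi.1 hi.2
      omega
    omega
  rw [hdv, hdw, splitv, splitw, sum1, sum2, key2, sumite]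
  ring

/-- Inserting in a nonempty area sequence `w` with maximal value `m` at a
position `c` with `w_c = m - 1` such that all letters after `c` are `< m`:
the dinv increases by `#{j : w_j = m} + #{j > c : w_j = m - 1}` and the
maximal value is unchanged. -/
theorem dinv_ins_at_submax (w : List ℕ) (hw : IsAreaSeq w) (hne : w ≠ [])
    (c : ℕ) (hc1 : 1 ≤ c) (hc2 : c ≤ w.length)
    (hcm : get1 w c + 1 = maxVal w)
    (hright : ∀ j ∈ Finset.Ioc c w.length, get1 w j < maxVal w) :
    dinv (ins w c) = dinv w +
        ((Finset.Icc 1 w.length).filter (fun j => get1 w j = maxVal w)).card +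
        ((Finset.Ioc c w.length).filter (fun j => get1 w j + 1 = maxVal w)).card ∧
      maxVal (ins w c) = maxVal w := by
  have hvlen := ins_length hc2
  have hvl : ∀ i, 1 ≤ i → i ≤ c → get1 (ins w c) i = get1 w i :=
    fun i h1 h2 => get1_ins_left hc1 hc2 h1 h2
  have hvm : get1 (ins w c) (c+1) = maxVal w := by rw [get1_ins_mid hc1 hc2, hcm]
  have hvr : ∀ i, c+2 ≤ i → get1 (ins w c) i = get1 w (i-1) :=
    fun i h => get1_ins_right hc1 hc2 h
  constructor
  · exact dinv_aux w (ins w c) (maxVal w) c hvlen hc1 hc2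
      (fun i h1 h2 => get1_le_maxVal h1 h2)
      (fun j hj1 hj2 => hright j (Finset.mem_Ioc.2 ⟨hj1, hj2⟩))
      hvl hvm hvr
  · apply le_antisymm
    · apply maxVal_le_of
      intro a ha
      unfold ins at ha
      rw [if_neg (by omega : ¬ c = 0)] at ha
      rcases List.mem_append.1 ha with h | h
      · exact le_maxVal_of_mem (List.take_subset _ _ h)
      · rcases List.mem_cons.1 h with h | h
        · rw [h, hcm]
        · exact le_maxVal_of_mem (List.drop_subset _ _ h)
    · apply le_maxVal_of_mem
      unfold ins
      rw [if_neg (by omega : ¬ c = 0), hcm]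
      exact List.mem_append_right _ List.mem_cons_self
end

section
/- For every nonempty area sequence w of size n with bounce sequence b_1 … b_n, we have |Maxa(ψ(w))| = w_n − b_n, where for a nonempty area sequence v with maximum value m, Maxa(v) = { i : v_i = m − 1 and v_j < m for all j > i }. -/
-- ============ foundations ============

lemma aux_getD_drop (l : List ℕ) (c j : ℕ) :
    (l.drop c).getD j 0 = l.getD (c + j) 0 := by
  by_cases h : j < (l.drop c).length
  · rw [List.getD_eq_getElem _ _ h, List.getElem_drop,
      List.getD_eq_getElem _ _ (by simp at h; omega)]
  · rw [List.getD_eq_default _ _ (by omega), List.getD_eq_default]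
    simp at h; omega

lemma aux_get1_drop (l : List ℕ) (c j : ℕ) (hj : c + 1 ≤ j) :
    get1 (l.drop c) (j - c) = get1 l j := by
  unfold get1
  rw [aux_getD_drop]
  congr 1; omega

lemma aux_maxVal_cons (x : ℕ) (l : List ℕ) : maxVal (x :: l) = max x (maxVal l) := rfl

lemma aux_maxVal_append (l1 l2 : List ℕ) :
    maxVal (l1 ++ l2) = max (maxVal l1) (maxVal l2) := by
  induction l1 with
  | nil => simp [maxVal]
  | cons a t ih => simp [aux_maxVal_cons, ih, max_assoc]

lemma aux_le_maxVal_of_mem {x : ℕ} {l : List ℕ} (h : x ∈ l) : x ≤ maxVal l := by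
  induction l with
  | nil => simp at h
  | cons a t ih =>
    rw [aux_maxVal_cons]
    rcases List.mem_cons.mp h with h | h
    · omega
    · exact le_trans (ih h) (le_max_right _ _)

lemma aux_maxVal_mem {l : List ℕ} (h : l ≠ []) : maxVal l ∈ l := by
  induction l with
  | nil => simp at h
  | cons a t ih =>
    rw [aux_maxVal_cons]
    rcases eq_or_ne t [] with rfl | ht
    · simp [maxVal]
    · rcases le_total (maxVal t) a with h1 | h1
      · simp [max_eq_left h1]
      · rw [max_eq_right h1]; exact List.mem_cons_of_mem _ (ih ht)

lemma aux_get1_le_maxVal (v : List ℕ) (i : ℕ) (hi : i ≤ v.length) :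
    get1 v i ≤ maxVal v := by
  rcases Nat.eq_zero_or_pos v.length with h | h
  · unfold get1
    rw [List.getD_eq_default _ _ (by omega)]; exact Nat.zero_le _
  · unfold get1
    rw [List.getD_eq_getElem _ _ (by omega)]
    exact aux_le_maxVal_of_mem (List.getElem_mem _)

lemma aux_exists_get1_eq_maxVal {v : List ℕ} (h : v ≠ []) :
    ∃ i, 1 ≤ i ∧ i ≤ v.length ∧ get1 v i = maxVal v := by
  obtain ⟨n, hn, he⟩ := List.mem_iff_getElem.mp (aux_maxVal_mem h)
  refine ⟨n + 1, by omega, by omega, ?_⟩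
  unfold get1
  rw [List.getD_eq_getElem _ _ (by omega : n + 1 - 1 < v.length)]
  simpa using he

-- countP / Finset card bridge

lemma aux_countP_eq_card (l : List ℕ) (p : ℕ → Prop) [DecidablePred p] :
    l.countP (fun x => decide (p x)) =
      ((Finset.range l.length).filter (fun j => p (l.getD j 0))).card := by
  induction l using List.reverseRecOn with
  | nil => simp
  | append_singleton t a ih =>
    rw [List.countP_append]
    have h1 : ((Finset.range (t ++ [a]).length).filter (fun j => p ((t ++ [a]).getD j 0))).card
        = ((Finset.range t.length).filter (fun j => p (t.getD j 0))).card
          + (if p a then 1 else 0) := by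
      have hlen : (t ++ [a]).length = t.length + 1 := by simp
      rw [hlen, Finset.range_add_one, Finset.filter_insert]
      have hget : ((t ++ [a]).getD t.length 0) = a := by
        rw [List.getD_append_right _ _ _ _ le_rfl]; simp
      have hcong : (Finset.range t.length).filter (fun j => p ((t ++ [a]).getD j 0))
          = (Finset.range t.length).filter (fun j => p (t.getD j 0)) := by
        apply Finset.filter_congr
        intro j hj
        rw [List.getD_append _ _ _ _ (Finset.mem_range.mp hj)]
      by_cases hp : p a
      · rw [if_pos (by rwa [hget]), Finset.card_insert_of_notMem (by simp), hcong, if_pos hp]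
      · rw [if_neg (by rwa [hget]), hcong, if_neg hp]
        omega
    rw [h1, ih]
    have : List.countP (fun x => decide (p x)) [a] = if p a then 1 else 0 := by
      by_cases hp : p a <;> simp [hp]
    rcases Classical.em (p a) with hp | hp <;> simp [hp]

lemma aux_card_Ioc_filter (v : List ℕ) (c : ℕ) (p : ℕ → Prop) [DecidablePred p] :
    ((Finset.Ioc c v.length).filter (fun i => p (get1 v i))).card =
      (v.drop c).countP (fun x => decide (p x)) := by
  rw [aux_countP_eq_card]
  apply Finset.card_nbij (fun i => i - c - 1)
  · intro i hi
    simp only [Finset.mem_coe, Finset.mem_filter, Finset.mem_Ioc, Finset.mem_range] at *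
    obtain ⟨⟨h1, h2⟩, h3⟩ := hi
    refine ⟨by simp; omega, ?_⟩
    rw [aux_getD_drop]
    have : c + (i - c - 1) = i - 1 := by omega
    rw [this]; exact h3
  · intro i hi j hj hij
    simp only [Finset.coe_filter, Set.mem_setOf_eq, Finset.mem_Ioc] at hi hj
    simp only at hij
    omega
  · intro j hj
    simp only [Finset.coe_filter, Set.mem_setOf_eq, Finset.mem_range, Set.mem_image,
      List.length_drop] at *
    obtain ⟨h1, h2⟩ := hj
    refine ⟨j + c + 1, ⟨Finset.mem_Ioc.mpr ⟨by omega, by omega⟩, ?_⟩, by omega⟩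
    rw [aux_getD_drop] at h2
    have : j + c + 1 - 1 = c + j := by omega
    unfold get1
    rw [this]; exact h2

lemma aux_Icc_eq_Ioc (n : ℕ) : Finset.Icc 1 n = Finset.Ioc 0 n := by
  ext i; simp; omega

lemma aux_card_Maxb (v : List ℕ) :
    (Maxb v).card = v.count (maxVal v) := by
  unfold Maxb
  rw [aux_Icc_eq_Ioc, aux_card_Ioc_filter v 0 (fun x => x = maxVal v)]
  rw [List.drop_zero, List.count]
  exact List.countP_congr (fun x _ => by simp)

-- ============ ins lemmas ============

lemma aux_length_ins (v : List ℕ) (c : ℕ) (hc : c ≤ v.length) :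
    (ins v c).length = v.length + 1 := by
  unfold ins; simp; omega

lemma aux_ins_take_len (v : List ℕ) (c : ℕ) (hc : c ≤ v.length) :
    (v.take c).length = c := by simp; omega

lemma aux_maxVal_ins (v : List ℕ) (c : ℕ) (hc : c ≤ v.length) :
    maxVal (ins v c) = max (if c = 0 then 0 else get1 v c + 1) (maxVal v) := by
  unfold ins
  rw [aux_maxVal_append, aux_maxVal_cons]
  have hv : max (maxVal (v.take c)) (maxVal (v.drop c)) = maxVal v := by
    rw [← aux_maxVal_append]; simp
  omega

lemma aux_count_ins (v : List ℕ) (c y : ℕ) :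
    (ins v c).count y = v.count y + (if (if c = 0 then 0 else get1 v c + 1) = y then 1 else 0) := by
  unfold ins
  rw [List.count_append, List.count_cons]
  conv_rhs => rw [show v = v.take c ++ v.drop c by simp, List.count_append]
  by_cases h : (if c = 0 then 0 else get1 v c + 1) = y <;> simp [h] <;> omega

lemma aux_get1_ins_le (v : List ℕ) (c j : ℕ) (hc1 : 1 ≤ c) (hc : c ≤ v.length) (hj : j ≤ c) :
    get1 (ins v c) j = get1 v j := by
  unfold ins get1
  rw [List.getD_append _ _ _ _ (by rw [aux_ins_take_len v c hc]; omega)]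
  by_cases h : j - 1 < (v.take c).length
  · rw [List.getD_eq_getElem _ _ h, List.getElem_take, List.getD_eq_getElem]
  · rw [aux_ins_take_len v c hc] at h; omega

lemma aux_get1_ins_succ (v : List ℕ) (c : ℕ) (hc : c ≤ v.length) :
    get1 (ins v c) (c + 1) = if c = 0 then 0 else get1 v c + 1 := by
  unfold ins get1
  rw [List.getD_append_right _ _ _ _ (by rw [aux_ins_take_len v c hc]; omega)]
  rw [aux_ins_take_len v c hc]
  simp

lemma aux_get1_ins_gt (v : List ℕ) (c j : ℕ) (hc : c ≤ v.length) (hj : c + 2 ≤ j) :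
    get1 (ins v c) j = get1 v (j - 1) := by
  unfold ins get1
  rw [List.getD_append_right _ _ _ _ (by rw [aux_ins_take_len v c hc]; omega)]
  rw [aux_ins_take_len v c hc]
  have h1 : j - 1 - c = (j - c - 2) + 1 := by omega
  rw [h1, List.getD_cons_succ, aux_getD_drop]
  congr 1; omega

lemma aux_drop_ins (v : List ℕ) (c : ℕ) (hc : c ≤ v.length) :
    (ins v c).drop (c + 1) = v.drop c := by
  unfold ins
  have : c + 1 = (v.take c).length + 1 := by rw [aux_ins_take_len v c hc]
  rw [this, List.drop_length_add_append, List.drop_one]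
  simp

lemma aux_isAreaSeq_ins (v : List ℕ) (c : ℕ) (hv : IsAreaSeq v) (hc : c ≤ v.length) :
    IsAreaSeq (ins v c) := by
  obtain ⟨hv1, hv2⟩ := hv
  constructor
  · intro _
    rcases Nat.eq_zero_or_pos c with rfl | hc1
    · rw [aux_get1_ins_succ v 0 (by omega)]; simp
    · rw [aux_get1_ins_le v c 1 hc1 hc (by omega)]
      apply hv1
      intro h; rw [h] at hc; simp at hc; omega
  · intro i hi1 hi2
    rw [aux_length_ins v c hc] at hi2
    rcases Nat.lt_or_ge i c with h | h
    · -- i + 1 <= c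
      rw [aux_get1_ins_le v c (i+1) (by omega) hc (by omega),
          aux_get1_ins_le v c i (by omega) hc (by omega)]
      exact hv2 i hi1 (by omega)
    rcases Nat.eq_or_lt_of_le h with hE | h2
    · -- i = c
      subst hE
      rw [aux_get1_ins_succ v c hc, aux_get1_ins_le v c c hi1 hc le_rfl]
      split <;> omega
    rcases Nat.eq_or_lt_of_le h2 with hE2 | h3
    · -- i = c + 1
      have hieq : i = c + 1 := by omega
      subst hieq
      rw [aux_get1_ins_gt v c (c+1+1) hc (by omega), aux_get1_ins_succ v c hc]
      have he : c + 1 + 1 - 1 = c + 1 := by omega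
      rw [he]
      rcases Nat.eq_zero_or_pos c with rfl | hc1
      · simp only [if_pos rfl]
        have := hv1 (by intro hnil; rw [hnil] at hi2; simp at hi2)
        have h01 : get1 v (0 + 1) = 0 := this
        omega
      · rw [if_neg (by omega)]
        have := hv2 c hc1 (by omega)
        omega
    · -- i >= c + 2
      rw [aux_get1_ins_gt v c (i+1) hc (by omega), aux_get1_ins_gt v c i hc (by omega)]
      have he : i + 1 - 1 = (i - 1) + 1 := by omega
      rw [he]
      exact hv2 (i-1) (by omega) (by omega)

-- ============ lastpos ============

def lastpos (v : List ℕ) : ℕ := (Maxb v).sup id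

lemma aux_Maxb_nonempty {v : List ℕ} (h : v ≠ []) : (Maxb v).Nonempty := by
  obtain ⟨i, h1, h2, h3⟩ := aux_exists_get1_eq_maxVal h
  exact ⟨i, Finset.mem_filter.mpr ⟨Finset.mem_Icc.mpr ⟨h1, h2⟩, h3⟩⟩

lemma aux_sup_id_mem {S : Finset ℕ} (h : S.Nonempty) : S.sup id ∈ S := by
  have h1 := Finset.max'_mem S h
  rwa [Finset.max'_eq_sup' S h, Finset.sup'_eq_sup h id] at h1

lemma aux_lastpos_mem {v : List ℕ} (h : v ≠ []) : lastpos v ∈ Maxb v :=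
  aux_sup_id_mem (aux_Maxb_nonempty h)

lemma aux_le_lastpos {v : List ℕ} {i : ℕ} (h : i ∈ Maxb v) : i ≤ lastpos v :=
  Finset.le_sup (f := id) h

lemma aux_lastpos_spec {v : List ℕ} (h : v ≠ []) :
    1 ≤ lastpos v ∧ lastpos v ≤ v.length ∧ get1 v (lastpos v) = maxVal v := by
  have h1 := aux_lastpos_mem h
  rw [Maxb, Finset.mem_filter, Finset.mem_Icc] at h1
  exact ⟨h1.1.1, h1.1.2, h1.2⟩

lemma aux_lastpos_unique {v : List ℕ} {L : ℕ} (hL1 : 1 ≤ L) (hL2 : L ≤ v.length)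
    (hL3 : get1 v L = maxVal v)
    (hL4 : ∀ j, L < j → j ≤ v.length → get1 v j ≠ maxVal v) : lastpos v = L := by
  have hne : v ≠ [] := by intro hh; rw [hh] at hL2; simp at hL2; omega
  have h1 := aux_le_lastpos (Finset.mem_filter.mpr ⟨Finset.mem_Icc.mpr ⟨hL1, hL2⟩, hL3⟩)
  have h2 := aux_lastpos_spec hne
  by_contra hne2
  exact hL4 (lastpos v) (by omega) h2.2.1 h2.2.2

lemma aux_Maxa_eq {v : List ℕ} (h : v ≠ []) :
    Maxa v = (Finset.Ioc (lastpos v) v.length).filter (fun i => get1 v i + 1 = maxVal v) := by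
  have hL := aux_lastpos_spec h
  ext i
  simp only [Maxa, Finset.mem_filter, Finset.mem_Icc, Finset.mem_Ioc]
  constructor
  · rintro ⟨⟨hi1, hi2⟩, hm, hall⟩
    refine ⟨⟨?_, hi2⟩, hm⟩
    rcases Nat.lt_or_ge (lastpos v) i with hlt | hge
    · omega
    rcases Nat.eq_or_lt_of_le hge with hE | hlt2
    · rw [hE] at hm
      have := hL.2.2
      omega
    · have := hall (lastpos v) ⟨hlt2, hL.2.1⟩
      omega
  · rintro ⟨⟨hi1, hi2⟩, hm⟩
    refine ⟨⟨by omega, hi2⟩, hm, ?_⟩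
    intro j hj
    have hle := aux_get1_le_maxVal v j hj.2
    rcases Nat.eq_or_lt_of_le hle with hE | hlt
    · exfalso
      have : j ∈ Maxb v := Finset.mem_filter.mpr
        ⟨Finset.mem_Icc.mpr ⟨by omega, hj.2⟩, hE⟩
      have := aux_le_lastpos this
      omega
    · exact hlt

lemma aux_card_Maxa {v : List ℕ} (h : v ≠ []) :
    (Maxa v).card =
      (v.drop (lastpos v)).countP (fun x => decide (x + 1 = maxVal v)) := by
  rw [aux_Maxa_eq h, aux_card_Ioc_filter v (lastpos v) (fun x => x + 1 = maxVal v)]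

-- ============ sorted filter lemma ============

lemma aux_sorted_filter_gt {l : List ℕ} (hs : l.Pairwise (·<·)) (k : ℕ) (hk : k < l.length) :
    l.filter (fun x => decide (l[k] < x)) = l.drop (k+1) := by
  obtain ⟨x, hx⟩ : ∃ x, l[k] = x := ⟨l[k], rfl⟩
  rw [hx]
  conv_lhs => rw [show l = l.take (k+1) ++ l.drop (k+1) by simp]
  rw [List.filter_append]
  rw [← hx]
  have h1 : (l.take (k+1)).filter (fun x => decide (l[k] < x)) = [] := by
    rw [List.filter_eq_nil_iff]
    intro a ha
    obtain ⟨i, hi, he⟩ := List.mem_take_iff_getElem.mp ha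
    have hik : i ≤ k := by omega
    have : l[i] ≤ l[k] := by
      rcases Nat.eq_or_lt_of_le hik with hE | hlt
      · subst hE; exact le_rfl
      · exact le_of_lt (List.Pairwise.rel_get_of_lt hs (a := ⟨i, by omega⟩) (b := ⟨k, hk⟩) hlt)
    simp only [← he, decide_eq_true_eq]
    omega
  have h2 : (l.drop (k+1)).filter (fun x => decide (l[k] < x)) = l.drop (k+1) := by
    rw [List.filter_eq_self]
    intro a ha
    obtain ⟨i, hi, he⟩ := List.mem_iff_getElem.mp ha
    have hi' : k + 1 + i < l.length := by
      simp only [List.length_drop] at hi; omega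
    have he' : l[k+1+i]'hi' = a := by rw [← he, List.getElem_drop]
    have hlt : l[k] < l[k+1+i]'hi' :=
      List.Pairwise.rel_get_of_lt hs (a := ⟨k, hk⟩) (b := ⟨k+1+i, hi'⟩) (by simp; omega)
    rw [he'] at hlt
    simp only [decide_eq_true_eq]
    exact hlt
  rw [h1, h2, List.nil_append]

lemma aux_card_filter_gt_sort (S : Finset ℕ) (k : ℕ) (hk : k < S.card) :
    (S.filter (fun i => (S.sort (· ≤ ·))[k]'(by rwa [Finset.length_sort]) < i)).card
      = S.card - 1 - k := by
  set l := S.sort (· ≤ ·) with hl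
  have hlen : l.length = S.card := Finset.length_sort _
  have hnd : l.Nodup := Finset.sort_nodup _ _
  have hkl : k < l.length := by omega
  have hS : l.toFinset = S := Finset.sort_toFinset _ _
  have h1 : S.filter (fun i => l[k] < i) = (l.filter (fun x => decide (l[k] < x))).toFinset := by
    rw [List.toFinset_filter, hS]
    apply Finset.filter_congr
    intro j _
    simp
  rw [h1, List.toFinset_card_of_nodup (hnd.filter _),
    aux_sorted_filter_gt (List.sortedLT_iff_pairwise.mp (Finset.sortedLT_sort S)) k hkl, List.length_drop]
  have hlen2 : (Finset.sort S (fun x1 x2 => x1 ≤ x2)).length = S.card := Finset.length_sort _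
  omega

-- ============ i0 ============

lemma aux_i0_mem {v : List ℕ} (h : v ≠ []) :
    1 ≤ i0 v ∧ i0 v ≤ v.length ∧ get1 v (i0 v) = maxVal v ∧
      (i0 v = 1 ∨ get1 v (i0 v - 1) ≠ maxVal v) := by
  set T := ((Finset.Icc 1 v.length).filter (fun i =>
    get1 v i = maxVal v ∧ (i = 1 ∨ get1 v (i - 1) ≠ maxVal v))) with hT
  have hTne : T.Nonempty := by
    have hne := aux_Maxb_nonempty h
    obtain ⟨L0, hL0mem, hL0min⟩ : ∃ L0 ∈ Maxb v, ∀ i ∈ Maxb v, L0 ≤ i :=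
      ⟨(Maxb v).min' hne, Finset.min'_mem _ _, fun i hi => Finset.min'_le _ _ hi⟩
    simp only [Maxb, Finset.mem_filter, Finset.mem_Icc] at hL0mem
    refine ⟨L0, Finset.mem_filter.mpr ⟨Finset.mem_Icc.mpr hL0mem.1, hL0mem.2, ?_⟩⟩
    rcases Nat.eq_or_lt_of_le hL0mem.1.1 with hE | hgt
    · left; omega
    · right
      intro hcon
      have hmem2 : L0 - 1 ∈ Maxb v := Finset.mem_filter.mpr
        ⟨Finset.mem_Icc.mpr ⟨by omega, by omega⟩, hcon⟩
      have := hL0min _ hmem2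
      omega
  have hmem : i0 v ∈ T := by
    rw [show i0 v = T.sup id from rfl]
    exact aux_sup_id_mem hTne
  rw [hT, Finset.mem_filter, Finset.mem_Icc] at hmem
  exact ⟨hmem.1.1, hmem.1.2, hmem.2.1, hmem.2.2⟩

lemma aux_i0_le_lastpos {v : List ℕ} (h : v ≠ []) : i0 v ≤ lastpos v := by
  obtain ⟨h1, h2, h3, _⟩ := aux_i0_mem h
  exact aux_le_lastpos (Finset.mem_filter.mpr ⟨Finset.mem_Icc.mpr ⟨h1, h2⟩, h3⟩)

lemma aux_i0_eq_one {v : List ℕ} (h : v ≠ []) (hm : maxVal v = 0) : i0 v = 1 := by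
  obtain ⟨h1, h2, h3, h4⟩ := aux_i0_mem h
  rcases h4 with h4 | h4
  · exact h4
  · exfalso
    have : i0 v - 1 ≤ v.length := by omega
    have := aux_get1_le_maxVal v (i0 v - 1) this
    omega

lemma aux_i0_pred {v : List ℕ} (h : v ≠ []) (hv : IsAreaSeq v) (hm : 1 ≤ maxVal v) :
    2 ≤ i0 v ∧ get1 v (i0 v - 1) + 1 = maxVal v := by
  obtain ⟨h1, h2, h3, h4⟩ := aux_i0_mem h
  have h10 : i0 v ≠ 1 := by
    intro hE
    rw [hE] at h3
    rw [hv.1 h] at h3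
    omega
  have h2i : 2 ≤ i0 v := by omega
  rcases h4 with h4 | h4
  · omega
  refine ⟨h2i, ?_⟩
  have harea := hv.2 (i0 v - 1) (by omega) (by omega)
  rw [show i0 v - 1 + 1 = i0 v by omega] at harea
  have hle := aux_get1_le_maxVal v (i0 v - 1) (by omega)
  omega

-- ============ filter-to-count conversions ============

lemma aux_Maxb_filter_gt (v : List ℕ) (c : ℕ) :
    ((Maxb v).filter (fun i => c < i)).card
      = (v.drop c).countP (fun t => decide (t = maxVal v)) := by
  rw [← aux_card_Ioc_filter v c (fun t => t = maxVal v)]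
  congr 1
  ext i
  simp only [Maxb, Finset.mem_filter, Finset.mem_Icc, Finset.mem_Ioc]
  constructor
  · rintro ⟨⟨⟨_, hi2⟩, hm⟩, hci⟩
    exact ⟨⟨hci, hi2⟩, hm⟩
  · rintro ⟨⟨hci, hi2⟩, hm⟩
    exact ⟨⟨⟨by omega, hi2⟩, hm⟩, hci⟩

lemma aux_Maxa_filter_gt {v : List ℕ} (h : v ≠ []) {c : ℕ} (hc : c ∈ Maxa v) :
    ((Maxa v).filter (fun i => c < i)).card
      = (v.drop c).countP (fun t => decide (t + 1 = maxVal v)) := by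
  have hcL : lastpos v < c := by
    rw [aux_Maxa_eq h, Finset.mem_filter, Finset.mem_Ioc] at hc
    exact hc.1.1
  rw [← aux_card_Ioc_filter v c (fun t => t + 1 = maxVal v)]
  congr 1
  ext i
  rw [aux_Maxa_eq h]
  simp only [Finset.mem_filter, Finset.mem_Ioc]
  constructor
  · rintro ⟨⟨⟨_, hi2⟩, hm⟩, hci⟩
    exact ⟨⟨hci, hi2⟩, hm⟩
  · rintro ⟨⟨hci, hi2⟩, hm⟩
    exact ⟨⟨⟨by omega, hi2⟩, hm⟩, hci⟩

-- ============ admissible indexing ============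

lemma aux_getD_reverse (l : List ℕ) (a : ℕ) (ha : a < l.length) :
    l.reverse.getD a 0 = l.getD (l.length - 1 - a) 0 := by
  rw [List.getD_eq_getElem _ _ (by simpa using ha), List.getElem_reverse,
    List.getD_eq_getElem _ _ (by omega)]

lemma aux_adm_B {v : List ℕ} (h : v ≠ []) {a : ℕ} (ha : a < (Maxb v).card) :
    ∃ c, (admissible v).getD a 0 = c ∧ c ∈ Maxb v ∧
      ((Maxb v).filter (fun i => c < i)).card = a := by
  set l := (Maxb v).sort (· ≤ ·) with hl
  have hlen : l.length = (Maxb v).card := Finset.length_sort _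
  have hk : (Maxb v).card - 1 - a < l.length := by omega
  refine ⟨l[(Maxb v).card - 1 - a], ?_, ?_, ?_⟩
  · unfold admissible
    rw [if_neg h, List.append_assoc,
      List.getD_append _ _ _ _ (by rw [List.length_reverse, ← hl, hlen]; omega),
      aux_getD_reverse _ _ (by rw [← hl, hlen]; omega),
      List.getD_eq_getElem _ _ (by rw [← hl]; omega)]
    congr 1
    rw [← hl, hlen]
  · exact (Finset.mem_sort _).mp (List.getElem_mem hk)
  · have h2 := aux_card_filter_gt_sort (Maxb v) ((Maxb v).card - 1 - a) (by omega)
    rw [h2]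
    omega

lemma aux_adm_A {v : List ℕ} (h : v ≠ []) {a : ℕ} (haB : (Maxb v).card ≤ a)
    (ha : a < (Maxb v).card + (Maxa v).card) :
    ∃ c, (admissible v).getD a 0 = c ∧ c ∈ Maxa v ∧
      ((Maxa v).filter (fun i => c < i)).card = a - (Maxb v).card := by
  set l := (Maxa v).sort (· ≤ ·) with hl
  have hlen : l.length = (Maxa v).card := Finset.length_sort _
  have hlenB : (((Maxb v).sort (· ≤ ·)).reverse).length = (Maxb v).card := by
    rw [List.length_reverse, Finset.length_sort]
  have hk : (Maxa v).card - 1 - (a - (Maxb v).card) < l.length := by omega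
  refine ⟨l[(Maxa v).card - 1 - (a - (Maxb v).card)], ?_, ?_, ?_⟩
  · unfold admissible
    rw [if_neg h, List.append_assoc,
      List.getD_append_right _ _ _ _ (by rw [hlenB]; omega),
      List.getD_append _ _ _ _ (by rw [hlenB, List.length_reverse, ← hl, hlen]; omega),
      aux_getD_reverse _ _ (by rw [hlenB, ← hl, hlen]; omega),
      List.getD_eq_getElem _ _ (by rw [← hl]; omega)]
    congr 1
    rw [← hl, hlen, hlenB]
  · exact (Finset.mem_sort _).mp (List.getElem_mem hk)
  · have h2 := aux_card_filter_gt_sort (Maxa v)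
      ((Maxa v).card - 1 - (a - (Maxb v).card)) (by omega)
    rw [h2]
    omega

lemma aux_adm_last {v : List ℕ} (h : v ≠ []) :
    (admissible v).getD ((Maxb v).card + (Maxa v).card) 0 = i0 v - 1 := by
  have hlenB : (((Maxb v).sort (· ≤ ·)).reverse).length = (Maxb v).card := by
    rw [List.length_reverse, Finset.length_sort]
  have hlenA : (((Maxa v).sort (· ≤ ·)).reverse).length = (Maxa v).card := by
    rw [List.length_reverse, Finset.length_sort]
  unfold admissible
  rw [if_neg h, List.append_assoc,
    List.getD_append_right _ _ _ _ (by rw [hlenB]; omega),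
    List.getD_append_right _ _ _ _ (by rw [hlenA, hlenB]; omega)]
  rw [hlenA, hlenB]
  simp

-- ============ append lemmas ============

lemma aux_get1_append (u : List ℕ) (x i : ℕ) (h1 : 1 ≤ i) (h2 : i ≤ u.length) :
    get1 (u ++ [x]) i = get1 u i := by
  unfold get1
  rw [List.getD_append _ _ _ _ (by omega)]

lemma aux_get1_append_last (u : List ℕ) (x : ℕ) :
    get1 (u ++ [x]) (u.length + 1) = x := by
  unfold get1
  rw [List.getD_append_right _ _ _ _ (by omega)]
  simp

lemma aux_bseq_succ (w : List ℕ) (k : ℕ) :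
    bseq w (k + 2) = if bseq w (k + 1) + 1 ≤ get1 w (k + 2) then bseq w (k + 1) + 1 else 0 := rfl

lemma aux_bseq_append (u : List ℕ) (x : ℕ) : ∀ i, i ≤ u.length → bseq (u ++ [x]) i = bseq u i := by
  intro i
  induction i with
  | zero => intro _; rfl
  | succ n ih =>
    intro h
    cases n with
    | zero => rfl
    | succ k =>
      rw [aux_bseq_succ, aux_bseq_succ, ih (by omega),
        aux_get1_append u x (k + 2) (by omega) (by omega)]

lemma aux_isAreaSeq_prefix {u : List ℕ} {x : ℕ} (h : IsAreaSeq (u ++ [x])) : IsAreaSeq u := by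
  constructor
  · intro hne
    have h1 := h.1 (by simp)
    rwa [aux_get1_append u x 1 le_rfl (by
      have := List.length_pos_iff.mpr hne; omega)] at h1
  · intro i hi1 hi2
    have h2 := h.2 i hi1 (by simp; omega)
    rwa [aux_get1_append u x (i+1) (by omega) (by omega),
      aux_get1_append u x i (by omega) (by omega)] at h2

lemma aux_psi_append (u : List ℕ) (x : ℕ) :
    psi (u ++ [x]) = ins (psi u) ((admissible (psi u)).getD x 0) := by
  unfold psi
  rw [List.reverse_append]
  rfl

-- ============ the main induction ============

theorem aux_main : ∀ (w : List ℕ), IsAreaSeq w → w ≠ [] →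
    IsAreaSeq (psi w) ∧ (psi w).length = w.length ∧
    (Maxb (psi w)).card = bseq w w.length + 1 ∧
    (Maxa (psi w)).card + bseq w w.length = get1 w w.length := by
  intro w
  induction w using List.reverseRecOn with
  | nil => intro _ h; simp at h
  | append_singleton u x ih =>
    intro hw _
    rcases eq_or_ne u [] with rfl | hu
    · -- base case : w = [x] with x = 0
      have hx : x = 0 := hw.1 (by simp)
      subst hx
      simp only [List.nil_append]
      have hpsi : psi [0] = [0] := rfl
      rw [hpsi]
      refine ⟨⟨fun _ => rfl, fun i hi1 hi2 => by simp at hi2; omega⟩, rfl, ?_, ?_⟩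
      · show (Maxb [0]).card = bseq [0] 1 + 1
        have : Maxb [0] = {1} := by decide
        rw [this]
        rfl
      · show (Maxa [0]).card + bseq [0] 1 = get1 [0] 1
        have : Maxa [0] = ∅ := by decide
        rw [this]
        rfl
    · -- inductive step
      have hwu : IsAreaSeq u := aux_isAreaSeq_prefix hw
      obtain ⟨hv1, hv2, hv3, hv4⟩ := ih hwu hu
      have hn1 : 1 ≤ u.length := by
        have := List.length_pos_iff.mpr hu; omega
      have hvne : psi u ≠ [] := by
        intro hh; rw [hh] at hv2; simp at hv2; omega
      have hvlen : (psi u).length = u.length := hv2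
      have hwlen : (u ++ [x]).length = u.length + 1 := by simp
      have hglast : get1 (u ++ [x]) (u.length + 1) = x := aux_get1_append_last u x
      have hgprev : get1 (u ++ [x]) u.length = get1 u u.length :=
        aux_get1_append u x u.length hn1 le_rfl
      have hbnew : bseq (u ++ [x]) (u.length + 1)
          = if bseq u u.length + 1 ≤ x then bseq u u.length + 1 else 0 := by
        obtain ⟨k, hk⟩ : ∃ k, u.length = k + 1 := ⟨u.length - 1, by omega⟩
        have e1 : bseq (u ++ [x]) (k + 1) = bseq u (k + 1) :=
          aux_bseq_append u x (k + 1) (by omega)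
        have e2 : get1 (u ++ [x]) (k + 2) = x := by
          rw [show k + 2 = u.length + 1 by omega]
          exact hglast
        rw [hk, aux_bseq_succ, e1, e2, ← hk]
      have hx_le : x ≤ get1 u u.length + 1 := by
        have h2 := hw.2 u.length hn1 (by rw [hwlen]; omega)
        rwa [hglast, hgprev] at h2
      have hBA : (Maxb (psi u)).card + (Maxa (psi u)).card = get1 u u.length + 1 := by omega
      rw [aux_psi_append u x]
      rcases Nat.lt_or_ge x ((Maxb (psi u)).card) with hcase | hge1
      · -- CASE 1 : x < B
        obtain ⟨c, hc_eq, hc_mem, hc_card⟩ := aux_adm_B hvne hcase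
        rw [hc_eq]
        have hc_props : (1 ≤ c ∧ c ≤ (psi u).length) ∧ get1 (psi u) c = maxVal (psi u) := by
          simpa only [Maxb, Finset.mem_filter, Finset.mem_Icc] using hc_mem
        obtain ⟨⟨hc1, hc2⟩, hcm⟩ := hc_props
        have hins_val : (if c = 0 then 0 else get1 (psi u) c + 1) = maxVal (psi u) + 1 := by
          rw [if_neg (by omega), hcm]
        have hlen' : (ins (psi u) c).length = (psi u).length + 1 := aux_length_ins _ _ hc2
        have hne' : ins (psi u) c ≠ [] := by
          intro hh; rw [hh] at hlen'; simp at hlen'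
        have hmax' : maxVal (ins (psi u) c) = maxVal (psi u) + 1 := by
          rw [aux_maxVal_ins _ _ hc2, hins_val]; omega
        have hcount0 : (psi u).count (maxVal (psi u) + 1) = 0 := by
          rw [List.count_eq_zero]
          intro hmem
          have := aux_le_maxVal_of_mem hmem
          omega
        have hcountB : (Maxb (ins (psi u) c)).card = 1 := by
          rw [aux_card_Maxb, hmax', aux_count_ins, hins_val, if_pos rfl, hcount0]
        have hlast' : lastpos (ins (psi u) c) = c + 1 := by
          apply aux_lastpos_unique (by omega) (by omega)
          · rw [aux_get1_ins_succ _ _ hc2, hins_val, hmax']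
          · intro j hj1 hj2
            rw [hlen'] at hj2
            rw [aux_get1_ins_gt _ _ _ hc2 (by omega), hmax']
            have := aux_get1_le_maxVal (psi u) (j - 1) (by omega)
            omega
        have hMaxa' : (Maxa (ins (psi u) c)).card = x := by
          rw [aux_card_Maxa hne', hlast', aux_drop_ins _ _ hc2, hmax']
          rw [List.countP_congr (q := fun t => decide (t = maxVal (psi u)))
            (fun t _ => by
              simp only [decide_eq_true_eq]
              exact ⟨fun h => by omega, fun h => by omega⟩)]
          rw [← aux_Maxb_filter_gt]
          exact hc_card
        have hbval : bseq (u ++ [x]) (u.length + 1) = 0 := by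
          rw [hbnew, if_neg (by omega)]
        refine ⟨aux_isAreaSeq_ins _ _ hv1 hc2, ?_, ?_, ?_⟩
        · rw [hlen', hvlen, hwlen]
        · rw [hwlen, hbval, hcountB]
        · rw [hwlen, hbval, hglast, hMaxa']
          omega
      rcases Nat.lt_or_ge x ((Maxb (psi u)).card + (Maxa (psi u)).card) with hcase | hge2
      · -- CASE 2 : B ≤ x < B + A
        obtain ⟨c, hc_eq, hc_mem, hc_card⟩ := aux_adm_A hvne hge1 hcase
        rw [hc_eq]
        have hc_props : (1 ≤ c ∧ c ≤ (psi u).length) ∧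
            (get1 (psi u) c + 1 = maxVal (psi u) ∧
              ∀ j ∈ Finset.Ioc c (psi u).length, get1 (psi u) j < maxVal (psi u)) := by
          simpa only [Maxa, Finset.mem_filter, Finset.mem_Icc] using hc_mem
        obtain ⟨⟨hc1, hc2⟩, hcm, hall⟩ := hc_props
        have hins_val : (if c = 0 then 0 else get1 (psi u) c + 1) = maxVal (psi u) := by
          rw [if_neg (by omega), hcm]
        have hlen' : (ins (psi u) c).length = (psi u).length + 1 := aux_length_ins _ _ hc2
        have hne' : ins (psi u) c ≠ [] := by
          intro hh; rw [hh] at hlen'; simp at hlen'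
        have hmax' : maxVal (ins (psi u) c) = maxVal (psi u) := by
          rw [aux_maxVal_ins _ _ hc2, hins_val]; omega
        have hcountB : (Maxb (ins (psi u) c)).card = (Maxb (psi u)).card + 1 := by
          rw [aux_card_Maxb, hmax', aux_count_ins, hins_val, if_pos rfl, ← aux_card_Maxb]
        have hlast' : lastpos (ins (psi u) c) = c + 1 := by
          apply aux_lastpos_unique (by omega) (by omega)
          · rw [aux_get1_ins_succ _ _ hc2, hins_val, hmax']
          · intro j hj1 hj2
            rw [hlen'] at hj2
            rw [aux_get1_ins_gt _ _ _ hc2 (by omega), hmax']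
            have := hall (j - 1) (Finset.mem_Ioc.mpr ⟨by omega, by omega⟩)
            omega
        have hMaxa' : (Maxa (ins (psi u) c)).card = x - (Maxb (psi u)).card := by
          rw [aux_card_Maxa hne', hlast', aux_drop_ins _ _ hc2, hmax']
          rw [← aux_Maxa_filter_gt hvne hc_mem]
          exact hc_card
        have hbval : bseq (u ++ [x]) (u.length + 1) = bseq u u.length + 1 := by
          rw [hbnew, if_pos (by omega)]
        refine ⟨aux_isAreaSeq_ins _ _ hv1 hc2, ?_, ?_, ?_⟩
        · rw [hlen', hvlen, hwlen]
        · rw [hwlen, hbval, hcountB]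
          omega
        · rw [hwlen, hbval, hglast, hMaxa']
          omega
      · -- CASE 3 : x = B + A
        have hxBA : x = (Maxb (psi u)).card + (Maxa (psi u)).card := by omega
        have hc_eq : (admissible (psi u)).getD x 0 = i0 (psi u) - 1 := by
          rw [hxBA]; exact aux_adm_last hvne
        rw [hc_eq]
        have hbval : bseq (u ++ [x]) (u.length + 1) = bseq u u.length + 1 := by
          rw [hbnew, if_pos (by omega)]
        rcases Nat.eq_zero_or_pos (maxVal (psi u)) with hm0 | hm1
        · -- subcase m = 0
          have hi01 : i0 (psi u) = 1 := aux_i0_eq_one hvne hm0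
          rw [hi01]
          have hc2 : 1 - 1 ≤ (psi u).length := by omega
          have hins_val : (if (1:ℕ) - 1 = 0 then 0 else get1 (psi u) (1-1) + 1) = 0 := by norm_num
          have hlen' : (ins (psi u) (1-1)).length = (psi u).length + 1 := aux_length_ins _ _ hc2
          have hne' : ins (psi u) (1-1) ≠ [] := by
            intro hh; rw [hh] at hlen'; simp at hlen'
          have hmax' : maxVal (ins (psi u) (1-1)) = 0 := by
            rw [aux_maxVal_ins _ _ hc2, hins_val, hm0]
            simp
          have hcountB : (Maxb (ins (psi u) (1-1))).card = (Maxb (psi u)).card + 1 := by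
            rw [aux_card_Maxb, hmax', aux_count_ins, hins_val, if_pos rfl,
              aux_card_Maxb, hm0]
          have hA0 : (Maxa (psi u)).card = 0 := by
            rw [aux_card_Maxa hvne, hm0]
            simp
          have hMaxa' : (Maxa (ins (psi u) (1-1))).card = 0 := by
            rw [aux_card_Maxa hne', hmax']
            simp
          refine ⟨aux_isAreaSeq_ins _ _ hv1 hc2, ?_, ?_, ?_⟩
          · rw [hlen', hvlen, hwlen]
          · rw [hwlen, hbval, hcountB]
            omega
          · rw [hwlen, hbval, hglast, hMaxa', hxBA]
            omega
        · -- subcase m ≥ 1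
          obtain ⟨hi02, hi0pred⟩ := aux_i0_pred hvne hv1 hm1
          obtain ⟨hL1, hL2, hL3⟩ := aux_lastpos_spec hvne
          have hi0L : i0 (psi u) ≤ lastpos (psi u) := aux_i0_le_lastpos hvne
          have hc1 : 1 ≤ i0 (psi u) - 1 := by omega
          have hc2 : i0 (psi u) - 1 ≤ (psi u).length := by omega
          have hins_val : (if i0 (psi u) - 1 = 0 then 0 else get1 (psi u) (i0 (psi u) - 1) + 1)
              = maxVal (psi u) := by
            rw [if_neg (by omega), hi0pred]
          have hlen' : (ins (psi u) (i0 (psi u) - 1)).length = (psi u).length + 1 :=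
            aux_length_ins _ _ hc2
          have hne' : ins (psi u) (i0 (psi u) - 1) ≠ [] := by
            intro hh; rw [hh] at hlen'; simp at hlen'
          have hmax' : maxVal (ins (psi u) (i0 (psi u) - 1)) = maxVal (psi u) := by
            rw [aux_maxVal_ins _ _ hc2, hins_val]; omega
          have hcountB : (Maxb (ins (psi u) (i0 (psi u) - 1))).card = (Maxb (psi u)).card + 1 := by
            rw [aux_card_Maxb, hmax', aux_count_ins, hins_val, if_pos rfl, ← aux_card_Maxb]
          have hlast' : lastpos (ins (psi u) (i0 (psi u) - 1)) = lastpos (psi u) + 1 := by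
            apply aux_lastpos_unique (by omega) (by omega)
            · rw [aux_get1_ins_gt _ _ _ hc2 (by omega), hmax']
              simpa using hL3
            · intro j hj1 hj2
              rw [hlen'] at hj2
              rw [aux_get1_ins_gt _ _ _ hc2 (by omega), hmax']
              intro hcon
              have : j - 1 ∈ Maxb (psi u) := Finset.mem_filter.mpr
                ⟨Finset.mem_Icc.mpr ⟨by omega, by omega⟩, hcon⟩
              have := aux_le_lastpos this
              omega
          have hdrop2 : (ins (psi u) (i0 (psi u) - 1)).drop (lastpos (psi u) + 1)
              = (psi u).drop (lastpos (psi u)) := by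
            have h1 : (ins (psi u) (i0 (psi u) - 1)).drop ((i0 (psi u) - 1) + 1)
                = (psi u).drop (i0 (psi u) - 1) := aux_drop_ins _ _ hc2
            calc (ins (psi u) (i0 (psi u) - 1)).drop (lastpos (psi u) + 1)
                = ((ins (psi u) (i0 (psi u) - 1)).drop ((i0 (psi u) - 1) + 1)).drop
                    (lastpos (psi u) - (i0 (psi u) - 1)) := by
                  rw [List.drop_drop]
                  congr 1
                  omega
              _ = ((psi u).drop (i0 (psi u) - 1)).drop (lastpos (psi u) - (i0 (psi u) - 1)) := by
                  rw [h1]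
              _ = (psi u).drop (lastpos (psi u)) := by
                  rw [List.drop_drop]
                  congr 1
                  omega
          have hMaxa' : (Maxa (ins (psi u) (i0 (psi u) - 1))).card = (Maxa (psi u)).card := by
            rw [aux_card_Maxa hne', hlast', hdrop2, hmax', ← aux_card_Maxa hvne]
          refine ⟨aux_isAreaSeq_ins _ _ hv1 hc2, ?_, ?_, ?_⟩
          · rw [hlen', hvlen, hwlen]
          · rw [hwlen, hbval, hcountB]
            omega
          · rw [hwlen, hbval, hglast, hMaxa', hxBA]
            omega


/-- For a nonempty area sequence `w` of size `n` with bounce sequence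
`b_1 … b_n`, we have `|Maxa (ψ w)| = w_n - b_n`. -/
theorem card_Maxa_psi (w : List ℕ) (hw : IsAreaSeq w) (hne : w ≠ []) :
    (Maxa (psi w)).card = get1 w w.length - bseq w w.length := by
  obtain ⟨-, -, -, h4⟩ := aux_main w hw hne
  omega
end
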